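/- Let λ ∈ [0,1], α_λ = (1/√d)[√((d−1)λ+1) − √(1−λ)], β_λ = √(1−λ), and χ_λ = α_λ φ_0 + β_λ ψ_0. Then for any unit vector η ∈ C^d, the vector φ = χ_λ ⊗ η satisfies ⟨φ,(A(j)⊗id)φ⟩ = λδ(j) + (1−λ)/d and ⟨φ,(B(k)⊗id)φ⟩ = γ_max δ(k) + (1−γ_max)/d with γ_max = (1/d)[(d−2)(1−λ) + 2√((1−d)λ² + (d−2)λ + 1)]. In particular χ_λ is a unit vector. -/

import Mathlib

open Matrix Kronecker Finset
open scoped ComplexOrder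

/-- ω = e^{2πi/d} -/
noncomputable def ww (d : ℕ) : ℂ := Complex.exp (2 * Real.pi * Complex.I / d)

/-- shift unitary U_x φ_k = φ_{k+x} -/
noncomputable def Um (d : ℕ) (x : ZMod d) : Matrix (ZMod d) (ZMod d) ℂ :=
  fun i j => if i = j + x then 1 else 0

/-- modulation unitary V_y φ_k = ω^{yk} φ_k -/
noncomputable def Vm (d : ℕ) (y : ZMod d) : Matrix (ZMod d) (ZMod d) ℂ :=
  Matrix.diagonal fun i => ww d ^ (y * i).val

/-- finite Fourier transform F φ_k = (1/√d) Σ_h ω^{-hk} φ_h -/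
noncomputable def Fm (d : ℕ) : Matrix (ZMod d) (ZMod d) ℂ :=
  fun i j => (1 / Real.sqrt d : ℂ) * (ww d)⁻¹ ^ (i * j).val

/-- the standard orthonormal basis vector φ_k -/
noncomputable def phiV (d : ℕ) (k : ZMod d) : ZMod d → ℂ := Pi.single k 1

/-- ψ_k = F* φ_k -/
noncomputable def psiV (d : ℕ) [NeZero d] (k : ZMod d) : ZMod d → ℂ :=
  (Fm d)ᴴ.mulVec (phiV d k)

/-- A(j) = |φ_j⟩⟨φ_j| -/
noncomputable def Aob (d : ℕ) (j : ZMod d) : Matrix (ZMod d) (ZMod d) ℂ :=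
  vecMulVec (phiV d j) (star (phiV d j))

/-- B(k) = |ψ_k⟩⟨ψ_k| -/
noncomputable def Bob (d : ℕ) [NeZero d] (k : ZMod d) : Matrix (ZMod d) (ZMod d) ℂ :=
  vecMulVec (psiV d k) (star (psiV d k))

section Helpers

lemma pow_mod_eq' {z : ℂ} {d : ℕ} (h1 : z ^ d = 1) (m : ℕ) : z ^ (m % d) = z ^ m := by
  conv_rhs => rw [← Nat.div_add_mod m d]
  rw [pow_add, pow_mul, h1, one_pow, one_mul]

lemma sum_val_range' {d : ℕ} [NeZero d] (f : ℕ → ℂ) :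
    ∑ i : ZMod d, f i.val = ∑ n ∈ range d, f n := by
  refine Finset.sum_nbij' (fun i => i.val) (fun n => (n : ZMod d)) ?_ ?_ ?_ ?_ ?_
  · intro i _; exact mem_range.2 (ZMod.val_lt i)
  · intro n _; exact mem_univ _
  · intro i _; exact_mod_cast (ZMod.natCast_val i).trans (ZMod.cast_id _ _)
  · intro n hn; exact ZMod.val_cast_of_lt (mem_range.1 hn)
  · intro i _; rfl

lemma sum_prim' {d : ℕ} [NeZero d] {z : ℂ} (hz : IsPrimitiveRoot z d) (k : ZMod d) :
    ∑ i : ZMod d, z ^ (k * i).val = if k = 0 then (d : ℂ) else 0 := by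
  have h1 : z ^ d = 1 := hz.pow_eq_one
  split_ifs with hk
  · subst hk
    simp [ZMod.val_zero]
  · have hterm : ∀ i : ZMod d, z ^ (k * i).val = (z ^ k.val) ^ i.val := by
      intro i
      rw [ZMod.val_mul, pow_mod_eq' h1, pow_mul]
    simp_rw [hterm]
    rw [sum_val_range' (fun n => (z ^ k.val) ^ n)]
    have hne : z ^ k.val ≠ 1 := by
      intro h
      have hdvd := (hz.pow_eq_one_iff_dvd k.val).1 h
      exact hk ((ZMod.val_eq_zero k).1 (Nat.eq_zero_of_dvd_of_lt hdvd (ZMod.val_lt k)))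
    rw [geom_sum_eq hne, ← pow_mul, mul_comm, pow_mul, h1, one_pow, sub_self, zero_div]

lemma star_ww (d : ℕ) : starRingEnd ℂ (ww d) = (ww d)⁻¹ := by
  rw [ww, ← Complex.exp_conj, ← Complex.exp_neg]
  congr 1
  simp only [map_div₀, _root_.map_mul, Complex.conj_I, Complex.conj_ofReal, map_ofNat,
    Complex.conj_natCast]
  ring

lemma psiV_apply (d : ℕ) [NeZero d] (k i : ZMod d) :
    psiV d k i = (1 / Real.sqrt d : ℂ) * (ww d) ^ (k * i).val := by
  simp only [psiV, mulVec, dotProduct, phiV, conjTranspose_apply, Fm]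
  rw [Finset.sum_eq_single k]
  · simp [Pi.single_apply, _root_.map_mul, map_pow, map_inv₀, star_ww]
  · intro b _ hb; simp [Pi.single_apply, hb]
  · intro h; exact absurd (mem_univ k) h

lemma kron_inner {d : ℕ} [NeZero d] (M : Matrix (ZMod d) (ZMod d) ℂ) (χ η : ZMod d → ℂ) :
    star (fun p : ZMod d × ZMod d => χ p.1 * η p.2) ⬝ᵥ
      ((M ⊗ₖ (1 : Matrix (ZMod d) (ZMod d) ℂ)).mulVec
        (fun p : ZMod d × ZMod d => χ p.1 * η p.2)) =
    (star χ ⬝ᵥ M.mulVec χ) * (star η ⬝ᵥ η) := by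
  simp only [dotProduct, mulVec, Pi.star_apply, kroneckerMap_apply, one_apply,
    Fintype.sum_prod_type, star_mul', mul_ite, mul_one, mul_zero, ite_mul, zero_mul,
    Finset.sum_ite_eq, mem_univ, if_true]
  rw [Finset.sum_mul_sum]
  apply Finset.sum_congr rfl
  intro i _
  apply Finset.sum_congr rfl
  intro m _
  simp only [Finset.mul_sum, Finset.sum_mul]
  apply Finset.sum_congr rfl
  intro i' _
  ring

lemma rank_one_inner {d : ℕ} [NeZero d] (u χ : ZMod d → ℂ) :
    star χ ⬝ᵥ (Matrix.vecMulVec u (star u)).mulVec χ =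
      (star χ ⬝ᵥ u) * (star u ⬝ᵥ χ) := by
  simp only [dotProduct, mulVec, Matrix.vecMulVec_apply, Pi.star_apply, Finset.mul_sum,
    Finset.sum_mul]
  rw [Finset.sum_comm]
  apply Finset.sum_congr rfl
  intro j _
  apply Finset.sum_congr rfl
  intro i _
  ring

lemma dot_single {d : ℕ} [NeZero d] (j : ZMod d) (v : ZMod d → ℂ) :
    star (phiV d j) ⬝ᵥ v = v j := by
  simp [phiV, dotProduct, Pi.single_apply]

lemma dot_conj {d : ℕ} [NeZero d] (u v : ZMod d → ℂ) :
    star u ⬝ᵥ v = starRingEnd ℂ (star v ⬝ᵥ u) := by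
  simp only [dotProduct, map_sum, Pi.star_apply, _root_.map_mul, Complex.conj_conj,
    RingHomCompTriple.comp_apply]
  exact Finset.sum_congr rfl fun i _ => by simp [mul_comm]

lemma sum_ite_zero' (d : ℕ) [NeZero d] (a b : ℝ) :
    ∑ i : ZMod d, (if i = 0 then a else b) = a + ((d : ℝ) - 1) * b := by
  rw [← Finset.add_sum_erase _ _ (Finset.mem_univ (0 : ZMod d))]
  simp only [if_pos rfl]
  congr 1
  rw [Finset.sum_congr rfl (fun i hi => if_neg (Finset.ne_of_mem_erase hi)), Finset.sum_const,
    Finset.card_erase_of_mem (Finset.mem_univ _), Finset.card_univ, ZMod.card, nsmul_eq_mul,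
    Nat.cast_sub (NeZero.pos d)]
  simp

end Helpers

theorem optimal_vector_achieves_bound (d : ℕ) (hd : 2 ≤ d) [NeZero d]
    (l : ℝ) (hl : 0 ≤ l) (hl1 : l ≤ 1) (η : ZMod d → ℂ) (hη : star η ⬝ᵥ η = 1) :
    let αl : ℝ := (1 / Real.sqrt d) * (Real.sqrt ((d - 1) * l + 1) - Real.sqrt (1 - l))
    let βl : ℝ := Real.sqrt (1 - l)
    let χ : ZMod d → ℂ := fun i => (αl : ℂ) * phiV d 0 i + (βl : ℂ) * psiV d 0 i
    let φ : ZMod d × ZMod d → ℂ := fun p => χ p.1 * η p.2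
    let γmax : ℝ := (1 / d) * ((d - 2) * (1 - l) +
      2 * Real.sqrt ((1 - d) * l ^ 2 + (d - 2) * l + 1))
    (star χ ⬝ᵥ χ = 1) ∧
    (∀ j : ZMod d,
      star φ ⬝ᵥ ((Aob d j ⊗ₖ (1 : Matrix (ZMod d) (ZMod d) ℂ)).mulVec φ) =
        ((l * (if j = 0 then 1 else 0) + (1 - l) / d : ℝ) : ℂ)) ∧
    (∀ k : ZMod d,
      star φ ⬝ᵥ ((Bob d k ⊗ₖ (1 : Matrix (ZMod d) (ZMod d) ℂ)).mulVec φ) =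
        ((γmax * (if k = 0 then 1 else 0) + (1 - γmax) / d : ℝ) : ℂ)) := by
  intro αl βl χ φ γmax
  have hD2 : (2 : ℝ) ≤ (d : ℝ) := by exact_mod_cast hd
  have hD0 : (0 : ℝ) < (d : ℝ) := by linarith
  have hS0 : 0 < Real.sqrt d := Real.sqrt_pos.2 hD0
  have hS : (Real.sqrt d) ^ 2 = (d : ℝ) := Real.sq_sqrt hD0.le
  have hA : (Real.sqrt ((d - 1) * l + 1)) ^ 2 = ((d : ℝ) - 1) * l + 1 :=
    Real.sq_sqrt (by nlinarith)
  have hB : (Real.sqrt (1 - l)) ^ 2 = 1 - l := Real.sq_sqrt (by linarith)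
  have hAD : (Real.sqrt ((d - 1) * l + 1)) ^ 2 + ((d : ℝ) - 1) * (Real.sqrt (1 - l)) ^ 2
      = (d : ℝ) := by rw [hA, hB]; ring
  have hG : Real.sqrt ((1 - (d : ℝ)) * l ^ 2 + ((d : ℝ) - 2) * l + 1)
      = Real.sqrt ((d - 1) * l + 1) * Real.sqrt (1 - l) := by
    have h : (1 - (d : ℝ)) * l ^ 2 + ((d : ℝ) - 2) * l + 1 = (((d : ℝ) - 1) * l + 1) * (1 - l) := by
      ring
    rw [h, Real.sqrt_mul (by nlinarith)]
  set A := Real.sqrt ((d - 1) * l + 1) with hAdef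
  set B := Real.sqrt (1 - l) with hBdef
  set S := Real.sqrt d with hSdef
  have hψ0 : psiV d 0 = fun _ : ZMod d => ((1 / S : ℝ) : ℂ) := by
    funext i
    rw [psiV_apply, zero_mul, ZMod.val_zero, pow_zero, mul_one]
    push_cast
    ring
  have hχ : ∀ i, χ i = (((if i = 0 then A else B) / S : ℝ) : ℂ) := by
    intro i
    simp only [χ, αl, βl, phiV, Pi.single_apply, hψ0, ← hAdef, ← hBdef, ← hSdef]
    split_ifs with h
    · push_cast; ring
    · push_cast; ring
  -- part 1
  have part1 : star χ ⬝ᵥ χ = 1 := by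
    have key : star χ ⬝ᵥ χ = ((∑ i : ZMod d, (if i = 0 then (A / S) ^ 2 else (B / S) ^ 2) : ℝ) : ℂ) := by
      rw [Complex.ofReal_sum]
      simp only [dotProduct, Pi.star_apply]
      apply Finset.sum_congr rfl
      intro i _
      rw [hχ i, Complex.star_def, Complex.conj_ofReal, ← Complex.ofReal_mul]
      congr 1
      split_ifs <;> ring
    rw [key]
    rw [sum_ite_zero']
    have : (A / S) ^ 2 + ((d : ℝ) - 1) * (B / S) ^ 2 = 1 := by
      field_simp
      linear_combination hAD - hS
    rw [this, Complex.ofReal_one]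
  refine ⟨part1, ?_, ?_⟩
  · -- A part
    intro j
    simp only [φ]
    rw [kron_inner, hη, mul_one, Aob, rank_one_inner, dot_single, dot_conj, dot_single, hχ j,
      Complex.conj_ofReal, ← Complex.ofReal_mul]
    congr 1
    split_ifs with h
    · rw [div_mul_div_comm, ← sq, ← sq, hA, hS]
      field_simp
      ring
    · rw [div_mul_div_comm, ← sq, ← sq, hB, hS]
      field_simp
      ring
  · -- B part
    intro k
    simp only [φ]
    rw [kron_inner, hη, mul_one, Bob, rank_one_inner]
    have conjψ : ∀ i, (starRingEnd ℂ) (psiV d k i)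
        = (1 / (S : ℂ)) * ((ww d)⁻¹) ^ (k * i).val := by
      intro i
      rw [psiV_apply, hSdef, _root_.map_mul, map_pow, star_ww]
      congr 1
      simp [map_div₀, Complex.conj_ofReal]
    have w1 : star (psiV d k) ⬝ᵥ χ
        = (((A - B) / d + (if k = 0 then B else 0) : ℝ) : ℂ) := by
      simp only [dotProduct, Pi.star_apply, Complex.star_def]
      simp_rw [conjψ, hχ]
      have hsplit : ∀ i : ZMod d, (((if i = 0 then A else B) / S : ℝ) : ℂ)
          = (((A - B) / S : ℝ) : ℂ) * (if i = 0 then 1 else 0) + ((B / S : ℝ) : ℂ) := by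
        intro i; split_ifs <;> push_cast <;> ring
      simp_rw [hsplit, mul_add, Finset.sum_add_distrib]
      have h1 : ∑ i : ZMod d, (1 / (S : ℂ)) * ((ww d)⁻¹) ^ (k * i).val
          * ((((A - B) / S : ℝ) : ℂ) * (if i = 0 then 1 else 0))
          = (1 / (S : ℂ)) * (((A - B) / S : ℝ) : ℂ) := by
        simp only [mul_ite, mul_one, mul_zero]
        rw [Finset.sum_ite_eq' univ (0 : ZMod d)]
        simp only [mem_univ, if_true, mul_zero, ZMod.val_zero, pow_zero, mul_one]
      have h2 : ∑ i : ZMod d, (1 / (S : ℂ)) * ((ww d)⁻¹) ^ (k * i).val * ((B / S : ℝ) : ℂ)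
          = (if k = 0 then (d : ℂ) else 0) * ((1 / (S : ℂ)) * ((B / S : ℝ) : ℂ)) := by
        have hz : IsPrimitiveRoot ((ww d)⁻¹) d :=
          (Complex.isPrimitiveRoot_exp d (NeZero.ne d)).inv
        calc ∑ i : ZMod d, (1 / (S : ℂ)) * ((ww d)⁻¹) ^ (k * i).val * ((B / S : ℝ) : ℂ)
            = (∑ i : ZMod d, ((ww d)⁻¹) ^ (k * i).val) * ((1 / (S : ℂ)) * ((B / S : ℝ) : ℂ)) := by
              rw [Finset.sum_mul]; apply Finset.sum_congr rfl; intro i _; ring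
          _ = (if k = 0 then (d : ℂ) else 0) * ((1 / (S : ℂ)) * ((B / S : ℝ) : ℂ)) := by
              rw [sum_prim' hz]
      rw [h1, h2]
      have hSC : ((S : ℝ) : ℂ) ^ 2 = (d : ℂ) := by
        rw [← Complex.ofReal_pow, hS]; push_cast; ring
      have hSne : ((S : ℝ) : ℂ) ≠ 0 := by
        simp [Complex.ofReal_ne_zero]; positivity
      have hdne : (d : ℂ) ≠ 0 := by
        exact_mod_cast Nat.cast_ne_zero.2 (NeZero.ne d)
      split_ifs with hk
      · push_cast
        rw [← hSC]
        field_simp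
      · push_cast
        rw [← hSC]
        field_simp
        ring
    have w2 : star χ ⬝ᵥ psiV d k
        = (((A - B) / d + (if k = 0 then B else 0) : ℝ) : ℂ) := by
      rw [dot_conj, w1, Complex.conj_ofReal]
    rw [w1, w2, ← Complex.ofReal_mul]
    congr 1
    simp only [γmax, hG]
    rw [← hB]
    split_ifs with h
    · field_simp
      linear_combination hAD
    · field_simp
      linear_combination hAD
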